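/- If λx.M ⇒_E N (a parallel η/SP-expansion from an abstraction), then there exists a term P such that N x →_R* P and M ⇒_E P. -/

import Mathlib

/-- Untyped lambda terms with pairing and projections, de Bruijn representation
(so terms are automatically identified up to alpha-equivalence). -/
inductive Tm : Type
  | var : Nat → Tm
  | app : Tm → Tm → Tm
  | lam : Tm → Tm
  | pair : Tm → Tm → Tm
  | p1 : Tm → Tm
  | p2 : Tm → Tm

/-- Shift free de Bruijn indices ≥ d up by one. -/
def Tm.lift (d : Nat) : Tm → Tm
  | .var n => if n < d then .var n else .var (n + 1)
  | .app a b => .app (a.lift d) (b.lift d)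
  | .lam a => .lam (a.lift (d + 1))
  | .pair a b => .pair (a.lift d) (b.lift d)
  | .p1 a => .p1 (a.lift d)
  | .p2 a => .p2 (a.lift d)

/-- Capture-avoiding substitution of s for variable k. -/
def Tm.subst : Tm → Nat → Tm → Tm
  | .var n, k, s => if n = k then s else if n < k then .var n else .var (n - 1)
  | .app a b, k, s => .app (a.subst k s) (b.subst k s)
  | .lam a, k, s => .lam (a.subst (k + 1) (s.lift 0))
  | .pair a b, k, s => .pair (a.subst k s) (b.subst k s)
  | .p1 a, k, s => .p1 (a.subst k s)
  | .p2 a, k, s => .p2 (a.subst k s)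

/-- One-step R-reduction: compatible closure of (β), (π₁), (π₂), (δπ), (π₁λ), (π₂λ). -/
inductive StepR : Tm → Tm → Prop
  | beta {M N} : StepR (.app (.lam M) N) (M.subst 0 N)
  | pi1 {M N} : StepR (.p1 (.pair M N)) M
  | pi2 {M N} : StepR (.p2 (.pair M N)) N
  | dpi {M N P} : StepR (.app (.pair M N) P) (.pair (.app M P) (.app N P))
  | pi1lam {M} : StepR (.p1 (.lam M)) (.lam (.p1 M))
  | pi2lam {M} : StepR (.p2 (.lam M)) (.lam (.p2 M))
  | lam {M M'} : StepR M M' → StepR (.lam M) (.lam M')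
  | appL {M M' N} : StepR M M' → StepR (.app M N) (.app M' N)
  | appR {M N N'} : StepR N N' → StepR (.app M N) (.app M N')
  | pairL {M M' N} : StepR M M' → StepR (.pair M N) (.pair M' N)
  | pairR {M N N'} : StepR N N' → StepR (.pair M N) (.pair M N')
  | p1 {M M'} : StepR M M' → StepR (.p1 M) (.p1 M')
  | p2 {M M'} : StepR M M' → StepR (.p2 M) (.p2 M')

/-- Parallel η/SP-expansion. -/
inductive ParE : Tm → Tm → Prop
  | refl {M} : ParE M M
  | lam {M M'} : ParE M M' → ParE (.lam M) (.lam M')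
  | app {M M' N N'} : ParE M M' → ParE N N' → ParE (.app M N) (.app M' N')
  | pair {M M' N N'} : ParE M M' → ParE N N' → ParE (.pair M N) (.pair M' N')
  | p1 {M M'} : ParE M M' → ParE (.p1 M) (.p1 M')
  | p2 {M M'} : ParE M M' → ParE (.p2 M) (.p2 M')
  | eta {M M'} : ParE M M' → ParE M (.lam (.app (M'.lift 0) (.var 0)))
  | sp {M M'} : ParE M M' → ParE M (.pair (.p1 M') (.p2 M'))


section Aux

open Relation

lemma lift_subst_var (t : Tm) (d : Nat) : (t.lift (d+1)).subst d (.var d) = t := by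
  induction t generalizing d with
  | var n =>
    simp only [Tm.lift, Tm.subst]
    split_ifs <;> simp_all [Tm.subst] <;> split_ifs <;> first | rfl | omega |
      (exact congrArg Tm.var (by omega))
  | app a b iha ihb => simp [Tm.lift, Tm.subst, iha, ihb]
  | lam a iha =>
    simp only [Tm.lift, Tm.subst]
    simp only [Nat.not_lt_zero, if_false]
    rw [iha]
  | pair a b iha ihb => simp [Tm.lift, Tm.subst, iha, ihb]
  | p1 a iha => simp [Tm.lift, Tm.subst, iha]
  | p2 a iha => simp [Tm.lift, Tm.subst, iha]

abbrev RT := Relation.ReflTransGen StepR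

lemma rt_pairC {a a' b b' : Tm} (h1 : RT a a') (h2 : RT b b') :
    RT (.pair a b) (.pair a' b') := by
  refine .trans (ReflTransGen.lift (fun x => Tm.pair x b) (fun _ _ h => StepR.pairL h) _ _ h1) ?_
  exact ReflTransGen.lift (fun x => Tm.pair a' x) (fun _ _ h => StepR.pairR h) _ _ h2

lemma rt_p1C {a a' : Tm} (h : RT a a') : RT (.p1 a) (.p1 a') :=
  ReflTransGen.lift Tm.p1 (fun _ _ h => StepR.p1 h) _ _ h

lemma rt_p2C {a a' : Tm} (h : RT a a') : RT (.p2 a) (.p2 a') :=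
  ReflTransGen.lift Tm.p2 (fun _ _ h => StepR.p2 h) _ _ h

/-- The packaged goal of the strengthened induction. -/
def Goal (M N : Tm) : Prop :=
  ∃ P Q, ParE M P ∧ ParE M Q ∧
    RT (.app (N.lift 0) (.var 0)) P ∧
    RT (.app (.p1 (N.lift 0)) (.var 0)) (.p1 Q) ∧
    RT (.app (.p2 (N.lift 0)) (.var 0)) (.p2 Q)

lemma goal_base {M M' : Tm} (h : ParE M M') : Goal M (.lam M') := by
  refine ⟨M', M', h, h, ?_, ?_, ?_⟩
  · have e : (M'.lift 1).subst 0 (.var 0) = M' := lift_subst_var M' 0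
    have : StepR (.app ((Tm.lam M').lift 0) (.var 0)) M' := by
      simpa [Tm.lift, e] using (StepR.beta (M := M'.lift 1) (N := .var 0))
    exact ReflTransGen.single this
  · have s1 : StepR (.app (.p1 ((Tm.lam M').lift 0)) (.var 0))
        (.app (.lam (.p1 (M'.lift 1))) (.var 0)) := by
      simpa [Tm.lift] using StepR.appL (StepR.pi1lam (M := M'.lift 1))
    have s2 : StepR (.app (.lam (.p1 (M'.lift 1))) (.var 0)) (.p1 M') := by
      have e : (Tm.p1 (M'.lift 1)).subst 0 (.var 0) = .p1 M' := by
        simp [Tm.subst, lift_subst_var M' 0]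
      simpa [e] using (StepR.beta (M := .p1 (M'.lift 1)) (N := .var 0))
    exact (ReflTransGen.single s1).trans (ReflTransGen.single s2)
  · have s1 : StepR (.app (.p2 ((Tm.lam M').lift 0)) (.var 0))
        (.app (.lam (.p2 (M'.lift 1))) (.var 0)) := by
      simpa [Tm.lift] using StepR.appL (StepR.pi2lam (M := M'.lift 1))
    have s2 : StepR (.app (.lam (.p2 (M'.lift 1))) (.var 0)) (.p2 M') := by
      have e : (Tm.p2 (M'.lift 1)).subst 0 (.var 0) = .p2 M' := by
        simp [Tm.subst, lift_subst_var M' 0]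
      simpa [e] using (StepR.beta (M := .p2 (M'.lift 1)) (N := .var 0))
    exact (ReflTransGen.single s1).trans (ReflTransGen.single s2)

lemma key {A N : Tm} (h : ParE A N) : ∀ M, A = .lam M → Goal M N := by
  induction h with
  | refl => rintro M rfl; exact goal_base ParE.refl
  | lam h ih =>
    intro M hM; injection hM with e; subst e
    exact goal_base h
  | app _ _ _ _ => intro M hM; exact Tm.noConfusion hM
  | pair _ _ _ _ => intro M hM; exact Tm.noConfusion hM
  | p1 _ _ => intro M hM; exact Tm.noConfusion hM
  | p2 _ _ => intro M hM; exact Tm.noConfusion hM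
  | eta h ih =>
    rintro M rfl
    obtain ⟨P, Q, hP, hQ, r1, r2, r3⟩ := ih M rfl
    rename_i N'
    -- the eta-expanded term
    set L : Tm := N'.lift 0 with hL
    have elift : (Tm.lam (.app L (.var 0))).lift 0
        = .lam (.app (L.lift 1) (.var 0)) := by simp [Tm.lift]
    have esub : (Tm.app (L.lift 1) (.var 0)).subst 0 (.var 0) = .app L (.var 0) := by
      simp [Tm.subst, lift_subst_var L 0]
    refine ⟨P, P, hP, hP, ?_, ?_, ?_⟩
    · have s : StepR (.app ((Tm.lam (.app L (.var 0))).lift 0) (.var 0)) (.app L (.var 0)) := by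
        rw [elift]
        simpa [esub] using (StepR.beta (M := .app (L.lift 1) (.var 0)) (N := .var 0))
      exact (ReflTransGen.single s).trans r1
    · have s1 : StepR (.app (.p1 ((Tm.lam (.app L (.var 0))).lift 0)) (.var 0))
          (.app (.lam (.p1 (.app (L.lift 1) (.var 0)))) (.var 0)) := by
        rw [elift]; exact StepR.appL StepR.pi1lam
      have s2 : StepR (.app (.lam (.p1 (.app (L.lift 1) (.var 0)))) (.var 0))
          (.p1 (.app L (.var 0))) := by
        have e : (Tm.p1 (.app (L.lift 1) (.var 0))).subst 0 (.var 0)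
            = .p1 (.app L (.var 0)) := by simp [Tm.subst, lift_subst_var L 0]
        simpa [e] using (StepR.beta (M := .p1 (.app (L.lift 1) (.var 0))) (N := .var 0))
      exact ((ReflTransGen.single s1).trans (ReflTransGen.single s2)).trans (rt_p1C r1)
    · have s1 : StepR (.app (.p2 ((Tm.lam (.app L (.var 0))).lift 0)) (.var 0))
          (.app (.lam (.p2 (.app (L.lift 1) (.var 0)))) (.var 0)) := by
        rw [elift]; exact StepR.appL StepR.pi2lam
      have s2 : StepR (.app (.lam (.p2 (.app (L.lift 1) (.var 0)))) (.var 0))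
          (.p2 (.app L (.var 0))) := by
        have e : (Tm.p2 (.app (L.lift 1) (.var 0))).subst 0 (.var 0)
            = .p2 (.app L (.var 0)) := by simp [Tm.subst, lift_subst_var L 0]
        simpa [e] using (StepR.beta (M := .p2 (.app (L.lift 1) (.var 0))) (N := .var 0))
      exact ((ReflTransGen.single s1).trans (ReflTransGen.single s2)).trans (rt_p2C r1)
  | sp h ih =>
    rintro M rfl
    obtain ⟨P, Q, hP, hQ, r1, r2, r3⟩ := ih M rfl
    rename_i N'
    set L : Tm := N'.lift 0 with hL
    have elift : (Tm.pair (.p1 N') (.p2 N')).lift 0 = .pair (.p1 L) (.p2 L) := by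
      simp [Tm.lift, hL]
    refine ⟨.pair (.p1 Q) (.p2 Q), Q, ParE.sp hQ, hQ, ?_, ?_, ?_⟩
    · have s : StepR (.app ((Tm.pair (.p1 N') (.p2 N')).lift 0) (.var 0))
          (.pair (.app (.p1 L) (.var 0)) (.app (.p2 L) (.var 0))) := by
        rw [elift]; exact StepR.dpi
      exact (ReflTransGen.single s).trans (rt_pairC r2 r3)
    · have s : StepR (.app (.p1 ((Tm.pair (.p1 N') (.p2 N')).lift 0)) (.var 0))
          (.app (.p1 L) (.var 0)) := by
        rw [elift]; exact StepR.appL StepR.pi1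
      exact (ReflTransGen.single s).trans r2
    · have s : StepR (.app (.p2 ((Tm.pair (.p1 N') (.p2 N')).lift 0)) (.var 0))
          (.app (.p2 L) (.var 0)) := by
        rw [elift]; exact StepR.appL StepR.pi2
      exact (ReflTransGen.single s).trans r3

end Aux

/-- If λx.M ⇒_E N then N x R-reduces to some P with M ⇒_E P
(the fresh variable x is rendered as de Bruijn index 0, with N lifted accordingly). -/
theorem parE_lam_app (M N : Tm) (h : ParE (.lam M) N) :
    ∃ P, Relation.ReflTransGen StepR (.app (N.lift 0) (.var 0)) P ∧ ParE M P := by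
  obtain ⟨P, Q, hP, hQ, r1, _, _⟩ := key h M rfl
  exact ⟨P, r1, hP⟩
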